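/- Let ω ∈ ℂ^{d×d} be positive definite and let Φ : ℂ^{d×d} → ℂ^{d×d} be a 2-positive, trace-preserving linear map with Φ(ω) = ω. Define Φ^#(X) := ω^{1/2} Φ†(ω^{−1/2} X ω^{−1/2}) ω^{1/2}, where Φ† is the Hilbert–Schmidt adjoint of Φ. Then Φ^# is 2-positive, trace-preserving, and satisfies Φ^#(ω) = ω. -/

import Mathlib

open Matrix
open scoped ComplexOrder

/-- A linear map on `d × d` complex matrices is *positive* if it sends positive semidefinite
matrices to positive semidefinite matrices. -/
def IsPosMap {d : ℕ} (Φ : Matrix (Fin d) (Fin d) ℂ → Matrix (Fin d) (Fin d) ℂ) : Prop :=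
  ∀ A : Matrix (Fin d) (Fin d) ℂ, A.PosSemidef → (Φ A).PosSemidef

/-- A map on `d × d` complex matrices is *2-positive* if it sends every positive semidefinite
`2d × 2d` block matrix `[[A, B], [C, D]]` to a positive semidefinite block matrix
`[[Φ A, Φ B], [Φ C, Φ D]]`. -/
def IsTwoPos {d : ℕ} (Φ : Matrix (Fin d) (Fin d) ℂ → Matrix (Fin d) (Fin d) ℂ) : Prop :=
  ∀ A B C D : Matrix (Fin d) (Fin d) ℂ,
    (Matrix.fromBlocks A B C D).PosSemidef →
    (Matrix.fromBlocks (Φ A) (Φ B) (Φ C) (Φ D)).PosSemidef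

/-- A map on matrices is *trace-preserving* if `tr (Φ X) = tr X` for all `X`. -/
def IsTracePreserving {d : ℕ} (Φ : Matrix (Fin d) (Fin d) ℂ → Matrix (Fin d) (Fin d) ℂ) : Prop :=
  ∀ X : Matrix (Fin d) (Fin d) ℂ, (Φ X).trace = X.trace

private lemma myTraceFromBlocks {n m : Type*} [Fintype n] [Fintype m]
    (A : Matrix n n ℂ) (B : Matrix n m ℂ) (C : Matrix m n ℂ) (D : Matrix m m ℂ) :
    (fromBlocks A B C D).trace = A.trace + D.trace := by
  simp [Matrix.trace, Fintype.sum_sum_type, Matrix.fromBlocks, Matrix.diag]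

private lemma psd_diag_nonneg {n : Type*} [Fintype n] [DecidableEq n]
    {M : Matrix n n ℂ} (hM : M.PosSemidef) (i : n) : 0 ≤ M i i := by
  simpa [dotProduct, Matrix.mulVec, Pi.single_apply, Finset.sum_ite_eq]
    using hM.dotProduct_mulVec_nonneg (Pi.single i 1)

private lemma psd_trace_nonneg {n : Type*} [Fintype n] [DecidableEq n]
    {M : Matrix n n ℂ} (hM : M.PosSemidef) : 0 ≤ M.trace :=
  Finset.sum_nonneg fun i _ => psd_diag_nonneg hM i

private lemma psd_mul_trace_nonneg {n : Type*} [Fintype n] [DecidableEq n]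
    {M N : Matrix n n ℂ} (hM : M.PosSemidef) (hN : N.PosSemidef) :
    0 ≤ (M * N).trace := by
  obtain ⟨B, rfl⟩ : ∃ B : Matrix n n ℂ, N = Bᴴ * B := by
    open scoped MatrixOrder in
    exact CStarAlgebra.nonneg_iff_eq_star_mul_self.mp hN.nonneg
  rw [← Matrix.mul_assoc, Matrix.trace_mul_cycle]
  exact psd_trace_nonneg (hM.mul_mul_conjTranspose_same B)

private lemma eq_of_trace_pairing {n : Type*} [Fintype n] [DecidableEq n]
    {X Y : Matrix n n ℂ}
    (h : ∀ A : Matrix n n ℂ, (Aᴴ * X).trace = (Aᴴ * Y).trace) : X = Y := by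
  have h0 : ((X - Y)ᴴ * (X - Y)).trace = 0 := by
    have := h (X - Y)
    rw [Matrix.mul_sub, Matrix.trace_sub, this, sub_self]
  have hz : X - Y = 0 := by
    set A := X - Y with hA
    have hdiag : ∀ j, ((Aᴴ * A) j j) = 0 := by
      have hnn : ∀ j ∈ Finset.univ, 0 ≤ (Aᴴ * A) j j :=
        fun j _ => psd_diag_nonneg (Matrix.posSemidef_conjTranspose_mul_self A) j
      intro j
      exact (Finset.sum_eq_zero_iff_of_nonneg hnn).mp h0 j (Finset.mem_univ j)
    ext i j
    have hj := hdiag j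
    rw [Matrix.mul_apply] at hj
    simp only [Matrix.conjTranspose_apply] at hj
    have : (fun i => A i j) = 0 := by
      apply dotProduct_star_self_eq_zero.mp
      simpa [dotProduct] using hj
    simpa using congrFun this i
  rw [sub_eq_zero] at hz
  exact hz

private lemma vecMulVec_star_posSemidef {n : Type*} [Fintype n] [DecidableEq n]
    (x : n → ℂ) : (vecMulVec x (star x)).PosSemidef := by
  refine Matrix.PosSemidef.of_dotProduct_mulVec_nonneg ?_ ?_
  · ext i j
    simp [Matrix.conjTranspose_apply, Matrix.vecMulVec_apply, mul_comm]
  · intro y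
    have h1 : (vecMulVec x (star x)) *ᵥ y = fun i => x i * (star x ⬝ᵥ y) := by
      ext i
      simp [Matrix.mulVec, Matrix.vecMulVec_apply, dotProduct, Finset.mul_sum, mul_assoc]
    rw [h1]
    have h2 : star y ⬝ᵥ (fun i => x i * (star x ⬝ᵥ y)) = (star y ⬝ᵥ x) * (star x ⬝ᵥ y) := by
      simp [dotProduct, Finset.sum_mul, mul_assoc]
    rw [h2]
    have h3 : star y ⬝ᵥ x = star (star x ⬝ᵥ y) := by
      simp [dotProduct, Finset.sum_mul, mul_comm]
    rw [h3]
    exact star_mul_self_nonneg _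

private lemma vecMulVec_star_conjTranspose {n m : Type*}
    (a : n → ℂ) (b : m → ℂ) :
    (vecMulVec a (star b))ᴴ = vecMulVec b (star a) := by
  ext i j
  simp [Matrix.conjTranspose_apply, Matrix.vecMulVec_apply, mul_comm]

private lemma quad_eq_trace {n : Type*} [Fintype n]
    (N : Matrix n n ℂ) (x : n → ℂ) :
    star x ⬝ᵥ N *ᵥ x = (N * vecMulVec x (star x)).trace := by
  simp only [Matrix.trace, Matrix.diag, Matrix.mul_apply, Matrix.vecMulVec_apply,
    dotProduct, Matrix.mulVec, Pi.star_apply]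
  apply Finset.sum_congr rfl
  intro j _
  rw [Finset.mul_sum]
  apply Finset.sum_congr rfl
  intro i _
  ring

private lemma vecMulVec_sum_blocks {n m : Type*} (x : n ⊕ m → ℂ) :
    vecMulVec x (star x) =
      fromBlocks (vecMulVec (x ∘ Sum.inl) (star (x ∘ Sum.inl)))
        (vecMulVec (x ∘ Sum.inl) (star (x ∘ Sum.inr)))
        (vecMulVec (x ∘ Sum.inr) (star (x ∘ Sum.inl)))
        (vecMulVec (x ∘ Sum.inr) (star (x ∘ Sum.inr))) := by
  ext i j
  cases i <;> cases j <;> simp [Matrix.vecMulVec_apply, Matrix.fromBlocks]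

private lemma phi_real {d : ℕ} (Φ : Module.End ℂ (Matrix (Fin d) (Fin d) ℂ))
    (h2 : IsTwoPos ⇑Φ) (X : Matrix (Fin d) (Fin d) ℂ) : Φ Xᴴ = (Φ X)ᴴ := by
  have hps : (fromBlocks (1 : Matrix (Fin d) (Fin d) ℂ) X Xᴴ (Xᴴ * X)).PosSemidef := by
    have heq : fromBlocks (1 : Matrix (Fin d) (Fin d) ℂ) X Xᴴ (Xᴴ * X) =
        (fromBlocks (1 : Matrix (Fin d) (Fin d) ℂ) X 0 0)ᴴ *
          fromBlocks (1 : Matrix (Fin d) (Fin d) ℂ) X 0 0 := by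
      rw [Matrix.fromBlocks_conjTranspose, Matrix.fromBlocks_multiply]
      simp
    rw [heq]
    exact Matrix.posSemidef_conjTranspose_mul_self _
  have hK : (fromBlocks (Φ 1) (Φ X) (Φ Xᴴ) (Φ (Xᴴ * X)))ᴴ
      = fromBlocks (Φ 1) (Φ X) (Φ Xᴴ) (Φ (Xᴴ * X)) := (h2 _ _ _ _ hps).1
  rw [Matrix.fromBlocks_conjTranspose] at hK
  have := congrArg Matrix.toBlocks₂₁ hK
  simpa [Matrix.toBlocks_fromBlocks₂₁] using this.symm

theorem sharp_twoPos_tracePreserving_fixes (d : ℕ)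
    (ω : Matrix (Fin d) (Fin d) ℂ) (hω : ω.PosDef)
    (s : Matrix (Fin d) (Fin d) ℂ) (hs : s.PosDef) (hss : s * s = ω)
    (Φ Ψ : Module.End ℂ (Matrix (Fin d) (Fin d) ℂ))
    (h2 : IsTwoPos ⇑Φ) (hTP : IsTracePreserving ⇑Φ) (hfix : Φ ω = ω)
    (hadj : ∀ A B : Matrix (Fin d) (Fin d) ℂ,
      ((Φ A)ᴴ * B).trace = (Aᴴ * Ψ B).trace)
    (Φsharp : Module.End ℂ (Matrix (Fin d) (Fin d) ℂ))
    (hΦsharp : ∀ X : Matrix (Fin d) (Fin d) ℂ,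
      Φsharp X = s * Ψ (s⁻¹ * X * s⁻¹) * s) :
    IsTwoPos ⇑Φsharp ∧ IsTracePreserving ⇑Φsharp ∧ Φsharp ω = ω := by
  have hreal : ∀ X : Matrix (Fin d) (Fin d) ℂ, Φ Xᴴ = (Φ X)ᴴ := phi_real Φ h2
  -- key trace identity
  have key : ∀ Q X : Matrix (Fin d) (Fin d) ℂ, (Ψ X * Q).trace = (Φ Q * X).trace := by
    intro Q X
    calc (Ψ X * Q).trace = (Q * Ψ X).trace := Matrix.trace_mul_comm _ _
      _ = ((Qᴴ)ᴴ * Ψ X).trace := by rw [Matrix.conjTranspose_conjTranspose]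
      _ = ((Φ Qᴴ)ᴴ * X).trace := (hadj Qᴴ X).symm
      _ = ((Φ Q)ᴴᴴ * X).trace := by rw [hreal Q]
      _ = (Φ Q * X).trace := by rw [Matrix.conjTranspose_conjTranspose]
  -- Ψ is real
  have hpsireal : ∀ B : Matrix (Fin d) (Fin d) ℂ, Ψ Bᴴ = (Ψ B)ᴴ := by
    intro B
    apply eq_of_trace_pairing
    intro A
    calc (Aᴴ * Ψ Bᴴ).trace = ((Φ A)ᴴ * Bᴴ).trace := (hadj A Bᴴ).symm
      _ = ((B * Φ A)ᴴ).trace := by rw [Matrix.conjTranspose_mul]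
      _ = star ((B * Φ A).trace) := Matrix.trace_conjTranspose _
      _ = star ((Φ A * B).trace) := by rw [Matrix.trace_mul_comm]
      _ = star (((Φ A)ᴴᴴ * B).trace) := by rw [Matrix.conjTranspose_conjTranspose]
      _ = star (((Φ Aᴴ)ᴴ * B).trace) := by rw [hreal A]
      _ = star (((Aᴴ)ᴴ * Ψ B).trace) := by rw [hadj Aᴴ B]
      _ = star ((A * Ψ B).trace) := by rw [Matrix.conjTranspose_conjTranspose]
      _ = star ((Ψ B * A).trace) := by rw [Matrix.trace_mul_comm]
      _ = ((Ψ B * A)ᴴ).trace := (Matrix.trace_conjTranspose _).symm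
      _ = (Aᴴ * (Ψ B)ᴴ).trace := by rw [Matrix.conjTranspose_mul]
  -- Ψ is 2-positive
  have hΨ2 : IsTwoPos ⇑Ψ := by
    intro A B C D hM
    have hMH : (fromBlocks A B C D)ᴴ = fromBlocks A B C D := hM.1
    rw [Matrix.fromBlocks_conjTranspose] at hMH
    have hA : Aᴴ = A := by simpa using congrArg Matrix.toBlocks₁₁ hMH
    have hB : Cᴴ = B := by simpa using congrArg Matrix.toBlocks₁₂ hMH
    have hC : Bᴴ = C := by simpa using congrArg Matrix.toBlocks₂₁ hMH
    have hD : Dᴴ = D := by simpa using congrArg Matrix.toBlocks₂₂ hMH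
    refine Matrix.PosSemidef.of_dotProduct_mulVec_nonneg ?_ ?_
    · show (fromBlocks (Ψ A) (Ψ B) (Ψ C) (Ψ D))ᴴ = fromBlocks (Ψ A) (Ψ B) (Ψ C) (Ψ D)
      rw [Matrix.fromBlocks_conjTranspose, ← hpsireal A, ← hpsireal C, ← hpsireal B,
        ← hpsireal D, hA, hB, hC, hD]
    · intro x
      set u := x ∘ Sum.inl with hu
      set v := x ∘ Sum.inr with hv
      set P11 := vecMulVec u (star u) with hP11
      set P12 := vecMulVec u (star v) with hP12
      set P21 := vecMulVec v (star u) with hP21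
      set P22 := vecMulVec v (star v) with hP22
      have hPblocks : vecMulVec x (star x) = fromBlocks P11 P12 P21 P22 :=
        vecMulVec_sum_blocks x
      rw [quad_eq_trace, hPblocks, Matrix.fromBlocks_multiply, myTraceFromBlocks,
        Matrix.trace_add, Matrix.trace_add]
      have hP : (fromBlocks P11 P12 P21 P22).PosSemidef := by
        rw [← hPblocks]; exact vecMulVec_star_posSemidef x
      have hK := h2 _ _ _ _ hP
      have hfinal := psd_mul_trace_nonneg hK hM
      rw [Matrix.fromBlocks_multiply, myTraceFromBlocks, Matrix.trace_add,
        Matrix.trace_add] at hfinal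
      have e11 : (Ψ A * P11).trace = (Φ P11 * A).trace := key P11 A
      have e21 : (Ψ B * P21).trace = (Φ P21 * B).trace := key P21 B
      have e12 : (Ψ C * P12).trace = (Φ P12 * C).trace := key P12 C
      have e22 : (Ψ D * P22).trace = (Φ P22 * D).trace := key P22 D
      rw [e11, e21, e12, e22]
      have hre : (Φ P11 * A).trace + (Φ P12 * C).trace + ((Φ P21 * B).trace + (Φ P22 * D).trace)
          = (Φ P11 * A).trace + (Φ P21 * B).trace + ((Φ P12 * C).trace + (Φ P22 * D).trace) := by
        ring
      rw [← hre]
      exact hfinal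
  -- basic facts about s and ω
  have hdet : IsUnit s.det := (Matrix.isUnit_iff_isUnit_det s).mp hs.isUnit
  have hinv : s⁻¹ * s = 1 := Matrix.nonsing_inv_mul s hdet
  have hinv' : s * s⁻¹ = 1 := Matrix.mul_nonsing_inv s hdet
  have hsH : sᴴ = s := hs.1
  have hsiH : (s⁻¹)ᴴ = s⁻¹ := hs.1.inv
  have hid : s⁻¹ * ω * s⁻¹ = 1 := by
    rw [← hss, ← Matrix.mul_assoc, hinv, Matrix.one_mul, hinv']
  have hψ1 : Ψ 1 = 1 := by
    apply eq_of_trace_pairing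
    intro A
    rw [Matrix.mul_one, Matrix.trace_conjTranspose, ← hTP A, ← Matrix.trace_conjTranspose,
      ← Matrix.mul_one ((Φ A)ᴴ), hadj A 1]
  refine ⟨?_, ?_, ?_⟩
  · -- 2-positivity of Φsharp
    intro A B C D hM
    have h1pre := hM.conjTranspose_mul_mul_same (fromBlocks s⁻¹ 0 0 s⁻¹)
    rw [Matrix.fromBlocks_conjTranspose, Matrix.fromBlocks_multiply,
      Matrix.fromBlocks_multiply] at h1pre
    simp only [hsiH, Matrix.conjTranspose_zero, Matrix.mul_zero, Matrix.zero_mul,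
      add_zero, zero_add] at h1pre
    have h2' := hΨ2 _ _ _ _ h1pre
    have h3 := h2'.conjTranspose_mul_mul_same (fromBlocks s 0 0 s)
    rw [Matrix.fromBlocks_conjTranspose, Matrix.fromBlocks_multiply,
      Matrix.fromBlocks_multiply] at h3
    simp only [hsH, Matrix.conjTranspose_zero, Matrix.mul_zero, Matrix.zero_mul,
      add_zero, zero_add] at h3
    simp only [hΦsharp]
    exact h3
  · -- trace preservation
    intro X
    rw [hΦsharp]
    have hc1 : (s * Ψ (s⁻¹ * X * s⁻¹) * s).trace = (Ψ (s⁻¹ * X * s⁻¹) * ω).trace := by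
      rw [Matrix.trace_mul_cycle, hss, Matrix.trace_mul_comm]
    rw [hc1, key ω (s⁻¹ * X * s⁻¹), hfix]
    calc (ω * (s⁻¹ * X * s⁻¹)).trace
        = ((s⁻¹ * X * s⁻¹) * ω).trace := Matrix.trace_mul_comm _ _
      _ = ((s⁻¹ * X) * (s⁻¹ * ω)).trace := by rw [Matrix.mul_assoc]
      _ = ((s⁻¹ * ω) * (s⁻¹ * X)).trace := Matrix.trace_mul_comm _ _
      _ = ((s⁻¹ * ω * s⁻¹) * X).trace := by rw [Matrix.mul_assoc (s⁻¹ * ω) s⁻¹ X]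
      _ = (1 * X).trace := by rw [hid]
      _ = X.trace := by rw [Matrix.one_mul]
  · -- fixes ω
    rw [hΦsharp, hid, hψ1, Matrix.mul_one, hss]
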